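/- For every $n\geq 1$, if $A$ and $B$ are infinite subsets of $\mathbb{N}^n$ with $A\cup B=\mathbb{N}^n$ and $A\cap B=\emptyset$, then there exist an infinite subset $C\subseteq A$, an index $k\in\{1,\ldots,n\}$, and a sign $s\in\{+1,-1\}$ such that for every $c\in C$, the point obtained from $c$ by adding $s$ to its $k$-th coordinate lies in $B$ (in particular, when $s=-1$, the $k$-th coordinate of each $c\in C$ is at least $2$). -/

import Mathlib

/-- Lemma 1.3: if `A, B` partition `ℕ^n` (`ℕ` the positive integers) into two
infinite sets, then there are an infinite `C ⊆ A`, a coordinate `k` and a sign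
such that either adding `1` to the `k`-th coordinate of each point of `C` lands
in `B`, or subtracting `1` from the `k`-th coordinate of each point of `C`
(which is then at least `2`) lands in `B`. -/
theorem partition_boundary {n : ℕ} (hn : 1 ≤ n)
    (A B : Set (Fin n → ℕ+)) (hA : A.Infinite) (hB : B.Infinite)
    (hU : A ∪ B = Set.univ) (hd : A ∩ B = ∅) :
    ∃ C : Set (Fin n → ℕ+), C ⊆ A ∧ C.Infinite ∧ ∃ k : Fin n,
      ((∀ c ∈ C, Function.update c k (c k + 1) ∈ B) ∨
       (∀ c ∈ C, ∃ m : ℕ+, m + 1 = c k ∧ Function.update c k m ∈ B)) := by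
  classical
  by_cases hplus : ∃ k : Fin n,
      {a ∈ A | Function.update a k (a k + 1) ∈ B}.Infinite
  · obtain ⟨k, hk⟩ := hplus
    exact ⟨_, fun a ha => ha.1, hk, k, Or.inl fun c hc => hc.2⟩
  by_cases hminus : ∃ k : Fin n,
      {a ∈ A | ∃ m : ℕ+, m + 1 = a k ∧ Function.update a k m ∈ B}.Infinite
  · obtain ⟨k, hk⟩ := hminus
    exact ⟨_, fun a ha => ha.1, hk, k, Or.inr fun c hc => hc.2⟩
  exfalso
  push_neg at hplus hminus
  set D : Set (Fin n → ℕ+) :=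
      (⋃ k, {a ∈ A | Function.update a k (a k + 1) ∈ B})
      ∪ (⋃ k, {a ∈ A | ∃ m : ℕ+, m + 1 = a k ∧ Function.update a k m ∈ B}) with hDdef
  have hDfin : D.Finite :=
    Set.Finite.union (Set.finite_iUnion hplus) (Set.finite_iUnion hminus)
  obtain ⟨M, hM⟩ : ∃ M : ℕ, ∀ d ∈ D, ∀ j, (d j : ℕ) ≤ M := by
    have himg : ((fun d : Fin n → ℕ+ => Finset.univ.sup fun j => (d j : ℕ)) '' D).Finite :=
      hDfin.image _
    obtain ⟨M, hMub⟩ := himg.bddAbove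
    refine ⟨M, fun d hd j => ?_⟩
    have h1 : (d j : ℕ) ≤ Finset.univ.sup fun j => (d j : ℕ) :=
      Finset.le_sup (f := fun j => (d j : ℕ)) (Finset.mem_univ j)
    exact le_trans h1 (hMub (Set.mem_image_of_mem _ hd))
  have hAB : ∀ x : Fin n → ℕ+, x ∈ A ∨ x ∈ B := fun x => by
    have : x ∈ A ∪ B := hU ▸ Set.mem_univ x
    exact this
  have hnot : ∀ x : Fin n → ℕ+, x ∈ A → x ∈ B → False := fun x hxA hxB =>
    Set.eq_empty_iff_forall_notMem.mp hd x ⟨hxA, hxB⟩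
  -- single step lemma
  have step : ∀ (x : Fin n → ℕ+) (k : Fin n), (∃ i, M < (x i : ℕ)) →
      (x ∈ A ↔ Function.update x k (x k + 1) ∈ A) := by
    intro x k hx
    set y := Function.update x k (x k + 1) with hy
    have hyG : ∃ i, M < (y i : ℕ) := by
      obtain ⟨i, hi⟩ := hx
      refine ⟨i, ?_⟩
      by_cases hik : i = k
      · subst hik
        have : y i = x i + 1 := Function.update_self i _ x
        rw [this]
        push_cast
        omega
      · rw [hy, Function.update_of_ne hik]; exact hi
    constructor
    · intro hxA
      rcases hAB y with hyA | hyB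
      · exact hyA
      · exfalso
        have hxD : x ∈ D :=
          Set.mem_union_left _ (Set.mem_iUnion.2 ⟨k, hxA, hyB⟩)
        obtain ⟨i, hi⟩ := hx
        exact absurd (hM x hxD i) (not_le.2 hi)
    · intro hyA
      rcases hAB x with hxA | hxB
      · exact hxA
      · exfalso
        have hupd : Function.update y k (x k) = x := by
          rw [hy, Function.update_idem, Function.update_eq_self]
        have hyk : x k + 1 = y k := (Function.update_self k _ x).symm
        have hymem : y ∈ {a ∈ A | ∃ m : ℕ+, m + 1 = a k ∧ Function.update a k m ∈ B} :=
          ⟨hyA, x k, hyk, by rw [hupd]; exact hxB⟩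
        have hyD : y ∈ D :=
          Set.mem_union_right _ (Set.mem_iUnion.2 ⟨k, hymem⟩)
        obtain ⟨i, hi⟩ := hyG
        exact absurd (hM y hyD i) (not_le.2 hi)
  -- raising one coordinate by t
  have reach : ∀ (t : ℕ) (x : Fin n → ℕ+) (k : Fin n) (m : ℕ+),
      (m : ℕ) = (x k : ℕ) + t → (∃ i, M < (x i : ℕ)) →
      (x ∈ A ↔ Function.update x k m ∈ A) := by
    intro t
    induction t with
    | zero =>
      intro x k m hm hx
      have : m = x k := by
        apply PNat.coe_injective; omega
      rw [this, Function.update_eq_self]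
    | succ t ih =>
      intro x k m hm hx
      have hpos : 0 < (x k : ℕ) + t := by positivity
      set m' : ℕ+ := ⟨(x k : ℕ) + t, hpos⟩ with hm'def
      have hm'c : (m' : ℕ) = (x k : ℕ) + t := rfl
      have h1 := ih x k m' hm'c hx
      set y := Function.update x k m' with hy
      have hyG : ∃ i, M < (y i : ℕ) := by
        obtain ⟨i, hi⟩ := hx
        by_cases hik : i = k
        · subst hik
          refine ⟨i, ?_⟩
          have : y i = m' := Function.update_self i _ x
          rw [this, hm'c]
          omega
        · exact ⟨i, by rw [hy, Function.update_of_ne hik]; exact hi⟩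
      have h2 := step y k hyG
      have hm1 : m' + 1 = m := by
        apply PNat.coe_injective
        push_cast [hm'c]
        omega
      have heq : Function.update y k (y k + 1) = Function.update x k m := by
        rw [hy, Function.update_idem, Function.update_self, hm1]
      rw [heq] at h2
      exact h1.trans h2
  -- changing one coordinate arbitrarily
  have single : ∀ (x : Fin n → ℕ+) (k : Fin n) (m : ℕ+),
      (∃ i, M < (x i : ℕ)) → (∃ i, M < ((Function.update x k m) i : ℕ)) →
      (x ∈ A ↔ Function.update x k m ∈ A) := by
    intro x k m hx hy
    rcases le_total (x k) m with h | h
    · have h' : (x k : ℕ) ≤ (m : ℕ) := by exact_mod_cast h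
      exact reach ((m : ℕ) - (x k : ℕ)) x k m (by omega) hx
    · have h' : (m : ℕ) ≤ (x k : ℕ) := by exact_mod_cast h
      have hk' : (Function.update x k m) k = m := Function.update_self k m x
      have := reach ((x k : ℕ) - (m : ℕ)) (Function.update x k m) k (x k)
        (by rw [hk']; omega) hy
      rw [Function.update_idem, Function.update_eq_self] at this
      exact this.symm
  -- connecting two points all of whose coordinates exceed M
  have connect : ∀ (x y : Fin n → ℕ+), (∀ i, M < (x i : ℕ)) → (∀ i, M < (y i : ℕ)) →
      (x ∈ A ↔ y ∈ A) := by
    intro x y hx hy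
    have key : ∀ S : Finset (Fin n),
        (x ∈ A ↔ (fun j => if j ∈ S then y j else x j) ∈ A) := by
      intro S
      induction S using Finset.induction with
      | empty => simp
      | @insert i S hiS ih =>
        have hz : (fun j => if j ∈ insert i S then y j else x j)
            = Function.update (fun j => if j ∈ S then y j else x j) i (y i) := by
          funext j
          by_cases hj : j = i
          · subst hj; simp [hiS]
          · simp [Function.update_of_ne hj, hj]
        rw [hz]
        refine ih.trans (single _ i (y i) ?_ ?_)
        · exact ⟨i, by by_cases h : i ∈ S <;> simp [h, hx i, hy i]⟩
        · exact ⟨i, by rw [Function.update_self]; exact hy i⟩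
    have hfin := key Finset.univ
    simpa using hfin
  -- lifting a point with one large coordinate to a point with all large coordinates
  have lift : ∀ (x : Fin n → ℕ+), (∃ i, M < (x i : ℕ)) →
      ∃ x' : Fin n → ℕ+, (∀ i, M < (x' i : ℕ)) ∧ (x ∈ A ↔ x' ∈ A) := by
    intro x hx
    obtain ⟨i0, hi0⟩ := hx
    set c : ℕ+ := ⟨M + 1, Nat.succ_pos M⟩ with hcdef
    have hc : (c : ℕ) = M + 1 := rfl
    have key : ∀ S : Finset (Fin n),
        (x ∈ A ↔ (fun j => if j ∈ S then x j + c else x j) ∈ A) ∧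
        (∃ i, M < (((fun j => if j ∈ S then x j + c else x j) : Fin n → ℕ+) i : ℕ)) := by
      intro S
      induction S using Finset.induction with
      | empty => exact ⟨by simp, ⟨i0, by simpa using hi0⟩⟩
      | @insert i S hiS ih =>
        obtain ⟨ih1, ih2⟩ := ih
        have hz : (fun j => if j ∈ insert i S then x j + c else x j)
            = Function.update (fun j => if j ∈ S then x j + c else x j) i (x i + c) := by
          funext j
          by_cases hj : j = i
          · subst hj; simp [hiS]
          · simp [Function.update_of_ne hj, hj]
        have hG2 : ∃ i', M <
            ((Function.update (fun j => if j ∈ S then x j + c else x j) i (x i + c)) i' : ℕ) := by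
          refine ⟨i0, ?_⟩
          by_cases hii : i0 = i
          · subst hii
            rw [Function.update_self]
            push_cast [hc]
            omega
          · rw [Function.update_of_ne hii]
            by_cases h : i0 ∈ S
            · simp only [h, if_pos]
              push_cast [hc]
              omega
            · simpa [h] using hi0
        refine ⟨?_, by rw [hz]; exact hG2⟩
        rw [hz]
        exact ih1.trans (single _ i (x i + c) ih2 hG2)
    obtain ⟨h1, _⟩ := key Finset.univ
    refine ⟨_, ?_, h1⟩
    intro i
    simp only [Finset.mem_univ, if_pos]
    push_cast [hc]
    omega
  -- the box is finite
  have boxfin : {x : Fin n → ℕ+ | ∀ i, (x i : ℕ) ≤ M}.Finite := by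
    have hsub : {x : Fin n → ℕ+ | ∀ i, (x i : ℕ) ≤ M}
        ⊆ Set.pi Set.univ (fun _ : Fin n => {m : ℕ+ | (m : ℕ) ≤ M}) := by
      intro x hx i _
      exact hx i
    refine Set.Finite.subset (Set.Finite.pi fun i => ?_) hsub
    have : {m : ℕ+ | (m : ℕ) ≤ M} = (fun m : ℕ+ => (m : ℕ)) ⁻¹' Set.Iic M := rfl
    rw [this]
    exact Set.Finite.preimage PNat.coe_injective.injOn (Set.finite_Iic M)
  obtain ⟨a, haA, haG⟩ : ∃ a ∈ A, ∃ i, M < (a i : ℕ) := by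
    obtain ⟨a, ha⟩ := (hA.diff boxfin).nonempty
    refine ⟨a, ha.1, ?_⟩
    have := ha.2
    simp only [Set.mem_setOf_eq, not_forall, not_le] at this
    exact this
  obtain ⟨b, hbB, hbG⟩ : ∃ b ∈ B, ∃ i, M < (b i : ℕ) := by
    obtain ⟨b, hb⟩ := (hB.diff boxfin).nonempty
    refine ⟨b, hb.1, ?_⟩
    have := hb.2
    simp only [Set.mem_setOf_eq, not_forall, not_le] at this
    exact this
  obtain ⟨a', ha'G, ha'⟩ := lift a haG
  obtain ⟨b', hb'G, hb'⟩ := lift b hbG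
  have hiff : a ∈ A ↔ b ∈ A := ha'.trans ((connect a' b' ha'G hb'G).trans hb'.symm)
  exact hnot b (hiff.mp haA) hbB
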